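/- Let (G,<) be a finite ordered connected graph with <-least vertex v₀. For each vertex v, let vec(v) be the least shortest path from v₀ to v under the order <* on paths that compares first by length and then lexicographically by the order <. Define v ≺ w iff vec(v) <* vec(w). Then ≺ is a breadth-first traversal of G. -/

import Mathlib

/-- The order `<*` on finite vertex sequences: first by length, then
lexicographically with respect to the linear order on vertices. -/
def travOrd {V : Type*} [LinearOrder V] (a b : List V) : Prop :=
  a.length < b.length ∨ (a.length = b.length ∧ List.Lex (· < ·) a b)

section Aux

variable {V : Type*} [LinearOrder V]

lemma lex_trans' {a b c : List V} (h1 : List.Lex (· < ·) a b) (h2 : List.Lex (· < ·) b c) :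
    List.Lex (· < ·) a c := by
  have e := List.lt_iff_lex_lt (α := V)
  exact (e a c).mp (lt_trans (a := a) (b := b) (c := c) ((e a b).mpr h1) ((e b c).mpr h2))

lemma lex_irrefl' (a : List V) : ¬ List.Lex (· < ·) a a := by
  exact fun h => (List.Lex.asymm ((· < ·) : V → V → Prop)).asymm _ _ h h

lemma travOrd_trans' {a b c : List V} (h1 : travOrd a b) (h2 : travOrd b c) : travOrd a c := by
  rcases h1 with h1 | ⟨e1, l1⟩ <;> rcases h2 with h2 | ⟨e2, l2⟩
  · exact Or.inl (h1.trans h2)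
  · exact Or.inl (e2 ▸ h1)
  · exact Or.inl (e1 ▸ h2)
  · exact Or.inr ⟨e1.trans e2, lex_trans' l1 l2⟩

lemma travOrd_irrefl' (a : List V) : ¬ travOrd a a := by
  rintro (h | ⟨-, h⟩)
  · exact lt_irrefl _ h
  · exact lex_irrefl' a h

lemma travOrd_trichotomy (a b : List V) : travOrd a b ∨ a = b ∨ travOrd b a := by
  rcases lt_trichotomy a.length b.length with h | h | h
  · exact Or.inl (Or.inl h)
  · rcases (lt_trichotomy a b).imp (List.lt_iff_lex_lt a b).mp (Or.imp_right (List.lt_iff_lex_lt b a).mp) with l | e | l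
    · exact Or.inl (Or.inr ⟨h, l⟩)
    · exact Or.inr (Or.inl e)
    · exact Or.inr (Or.inr (Or.inr ⟨h.symm, l⟩))
  · exact Or.inr (Or.inr (Or.inl h))

lemma lex_append_singleton : ∀ {a b : List V} {x y : V}, a.length = b.length →
    List.Lex (· < ·) (a ++ [x]) (b ++ [y]) → List.Lex (· < ·) a b ∨ a = b
  | [], [], _, _, _, _ => Or.inr rfl
  | [], _ :: _, _, _, h, _ => by simp at h
  | _ :: _, [], _, _, h, _ => by simp at h
  | a :: as, b :: bs, x, y, hl, hlex => by
    cases hlex with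
    | rel h => exact Or.inl (List.Lex.rel h)
    | cons h =>
      rcases lex_append_singleton (by simpa using hl) h with h' | h'
      · exact Or.inl (List.Lex.cons h')
      · exact Or.inr (by rw [h'])

lemma exists_concat_of_not_nil {G : SimpleGraph V} {a b : V} (p : G.Walk a b) (hp : ¬ p.Nil) :
    ∃ (x : V) (q : G.Walk a x) (h : G.Adj x b), p = q.concat h := by
  cases p with
  | nil => simp at hp
  | cons h q => exact SimpleGraph.Walk.exists_cons_eq_concat h q

end Aux

/-- Let `(G,<)` be a finite ordered connected graph with least vertex `v₀`, and
for each `v` let `vec v` be the `<*`-least shortest path from `v₀` to `v`.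
Define `v ≺ w` iff `vec v <* vec w` (comparing supports). Then `≺` is a linear
order and a breadth-first traversal of `G`. -/
theorem canonical_bft {V : Type*} [Fintype V] [LinearOrder V]
    (G : SimpleGraph V) (hc : G.Connected) (v0 : V) (hv0 : ∀ u : V, v0 ≤ u)
    (vec : ∀ v : V, G.Walk v0 v)
    (hpath : ∀ v : V, (vec v).IsPath)
    (hleast : ∀ (v : V) (q : G.Walk v0 v), q.IsPath →
      (vec v).support = q.support ∨ travOrd (vec v).support q.support) :
    IsStrictTotalOrder V (fun v w : V => travOrd (vec v).support (vec w).support) ∧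
    ∀ u v w : V,
      travOrd (vec u).support (vec v).support →
      travOrd (vec v).support (vec w).support →
      G.Adj u w →
      ∃ x : V, travOrd (vec x).support (vec v).support ∧
        (travOrd (vec x).support (vec u).support ∨ x = u) ∧ G.Adj x v := by
  classical
  -- endpoints are determined by supports
  have hsupp_inj : ∀ {a b : V}, (vec a).support = (vec b).support → a = b := by
    intro a b hab
    have h1 : (vec a).support.getLast? = some a := by
      rw [List.getLast?_eq_getLast (vec a).support_ne_nil, SimpleGraph.Walk.getLast_support]
    have h2 : (vec b).support.getLast? = some b := by
      rw [List.getLast?_eq_getLast (vec b).support_ne_nil, SimpleGraph.Walk.getLast_support]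
    rw [hab, h2] at h1
    exact (Option.some_injective _ h1).symm
  -- length bound from minimality
  have hlenle : ∀ (v : V) (q : G.Walk v0 v), q.IsPath → (vec v).length ≤ q.length := by
    intro v q hq
    rcases hleast v q hq with h | h | ⟨h, -⟩
    · have := congrArg List.length h
      simp only [SimpleGraph.Walk.length_support] at this
      omega
    · simp only [SimpleGraph.Walk.length_support] at h
      omega
    · simp only [SimpleGraph.Walk.length_support] at h
      omega
  have hlen_of : ∀ {a b : V}, travOrd (vec a).support (vec b).support →
      (vec a).length ≤ (vec b).length := by
    rintro a b (h | ⟨h, -⟩) <;> simp only [SimpleGraph.Walk.length_support] at h <;> omega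
  have hlex_of : ∀ {a b : V}, travOrd (vec a).support (vec b).support →
      (vec a).length = (vec b).length → List.Lex (· < ·) (vec a).support (vec b).support := by
    rintro a b (h | ⟨-, h⟩) he
    · simp only [SimpleGraph.Walk.length_support] at h; omega
    · exact h
  constructor
  · refine { trichotomous := ?_, irrefl := fun a => travOrd_irrefl' _,
             trans := fun a b c => travOrd_trans' }
    intro a b
    rcases travOrd_trichotomy (vec a).support (vec b).support with h | h | h
    · exact fun h1 _ => absurd h h1
    · exact fun _ _ => hsupp_inj h
    · exact fun _ h2 => absurd h h2
  · intro u v w huv hvw huw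
    have huw' : travOrd (vec u).support (vec w).support := travOrd_trans' huv hvw
    have hune : u ≠ w := fun h => travOrd_irrefl' _ (h ▸ huw')
    have luv : (vec u).length ≤ (vec v).length := hlen_of huv
    have lvw : (vec v).length ≤ (vec w).length := hlen_of hvw
    -- w is not on the path to u
    have hwnot : w ∉ (vec u).support := by
      intro hw
      have ht : ((vec u).takeUntil w hw).IsPath := (hpath u).takeUntil hw
      have h1 : (vec w).length ≤ ((vec u).takeUntil w hw).length := hlenle w _ ht
      have h2 : ((vec u).takeUntil w hw).length ≤ (vec u).length :=
        SimpleGraph.Walk.length_takeUntil_le _ hw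
      have heqlen : ((vec u).takeUntil w hw).length = (vec u).length := by omega
      have hspec := (vec u).take_spec hw
      have := congrArg SimpleGraph.Walk.length hspec
      rw [SimpleGraph.Walk.length_append] at this
      have hz : ((vec u).dropUntil w hw).length = 0 := by omega
      exact hune (SimpleGraph.Walk.eq_of_length_eq_zero hz).symm
    -- extend vec u by the edge to w
    set qw : G.Walk v0 w := (vec u).concat huw with hqw
    have hqwpath : qw.IsPath := by
      rw [SimpleGraph.Walk.isPath_def, hqw, SimpleGraph.Walk.support_concat]
      simpa [List.concat_eq_append, List.nodup_append] using
        ⟨(hpath u).support_nodup, fun a ha h => hwnot (h ▸ ha)⟩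
    have hqwlen : qw.length = (vec u).length + 1 := SimpleGraph.Walk.length_concat _ _
    have hwle : (vec w).length ≤ (vec u).length + 1 := hqwlen ▸ hlenle w qw hqwpath
    -- vec v is nontrivial
    have hnil : ¬ (vec v).Nil := by
      intro hn
      have hsup : (vec v).support = [v0] := SimpleGraph.Walk.nil_iff_support_eq.mp hn
      rcases huv with h | ⟨h, hlex⟩
      · rw [hsup] at h
        simp only [SimpleGraph.Walk.length_support, List.length_singleton] at h
        omega
      · rw [hsup] at h hlex
        have hu0 : (vec u).length = 0 := by
          simp only [SimpleGraph.Walk.length_support, List.length_singleton] at h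
          omega
        have : (vec u).support = [v0] :=
          SimpleGraph.Walk.nil_iff_support_eq.mp (SimpleGraph.Walk.nil_iff_length_eq.mpr hu0)
        rw [this] at hlex
        exact lex_irrefl' _ hlex
    obtain ⟨x, q, hxv, heq⟩ := exists_concat_of_not_nil (vec v) hnil
    have hvsupp : (vec v).support = q.support ++ [v] := by
      rw [heq, SimpleGraph.Walk.support_concat]
    have hvlen : (vec v).length = q.length + 1 := by
      rw [heq, SimpleGraph.Walk.length_concat]
    have hqpath : q.IsPath := by
      have := (hpath v).support_nodup
      rw [hvsupp, List.nodup_append] at this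
      exact SimpleGraph.Walk.IsPath.mk' this.1
    have hxle : (vec x).length ≤ q.length := hlenle x q hqpath
    refine ⟨x, Or.inl ?_, ?_, hxv⟩
    · simp only [SimpleGraph.Walk.length_support]; omega
    rcases travOrd_trichotomy (vec x).support (vec u).support with h | h | h
    · exact Or.inl h
    · exact Or.inr (hsupp_inj h)
    · -- u ≺ x : derive a contradiction
      exfalso
      have lux : (vec u).length ≤ (vec x).length := hlen_of h
      have hvlen' : (vec v).length = (vec u).length + 1 := by omega
      have hxlen : (vec x).length = (vec u).length := by omega
      have hwlen : (vec w).length = (vec u).length + 1 := by omega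
      -- Lex (vec u) (vec x)
      have hlex_ux : List.Lex (· < ·) (vec u).support (vec x).support :=
        hlex_of h hxlen.symm
      -- Lex (vec u) q
      have hlex_uq : List.Lex (· < ·) (vec u).support q.support := by
        rcases hleast x q hqpath with h' | h' | ⟨-, h'⟩
        · exact h' ▸ hlex_ux
        · simp only [SimpleGraph.Walk.length_support] at h'; omega
        · exact lex_trans' hlex_ux h'
      -- Lex (vec v) ((vec u).support ++ [w])
      have hqwsupp : qw.support = (vec u).support ++ [w] := by
        rw [hqw, SimpleGraph.Walk.support_concat]
      have hlex_vw : List.Lex (· < ·) (vec v).support (vec w).support :=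
        hlex_of hvw (by omega)
      have hlex_vqw : List.Lex (· < ·) (vec v).support ((vec u).support ++ [w]) := by
        rcases hleast w qw hqwpath with h' | h' | ⟨-, h'⟩
        · rw [← hqwsupp, ← h']; exact hlex_vw
        · simp only [SimpleGraph.Walk.length_support, hqwlen] at h'; omega
        · rw [← hqwsupp]; exact lex_trans' hlex_vw h'
      rw [hvsupp] at hlex_vqw
      have hlenq : q.support.length = (vec u).support.length := by
        simp only [SimpleGraph.Walk.length_support]; omega
      rcases lex_append_singleton hlenq hlex_vqw with h' | h'
      · exact lex_irrefl' _ (lex_trans' hlex_uq h')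
      · rw [h'] at hlex_uq
        exact lex_irrefl' _ hlex_uq
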